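/- With B = k[a,x,y,z,v] and D defined by z→y→x→a³, v→a², a→0, set A = ker D. The six elements σ₀ = a, σ₁ = av − x, 2!σ₂ = av² − 2xv + 2a²y, 3!σ₃ = av³ − 3xv² + 6a²yv − 6a⁴z, 4!σ₄ = av⁴ − 4xv³ + 12a²yv² − 24a⁴zv + 24a³xz − 12a³y², 5!σ₅ = av⁵ − 5xv⁴ + 20a²yv³ − 60a⁴zv² + 120a³xzv − 60a³y²v − 72x²a²z + 36xa²y² + 24a⁵yz all lie in A, and ∂σₙ/∂v = σ_{n-1} for 1 ≤ n ≤ 5. -/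
import Mathlib


open MvPolynomial

/-- The derivation `D` of `B = k[a,x,y,z,v]` with `Dz = y`, `Dy = x`, `Dx = a³`, `Dv = a²`,
`Da = 0` (variables `a = X 0`, `x = X 1`, `y = X 2`, `z = X 3`, `v = X 4`). -/
noncomputable def dimFiveDer (k : Type*) [Field k] [CharZero k] :
    Derivation k (MvPolynomial (Fin 5) k) (MvPolynomial (Fin 5) k) :=
  MvPolynomial.mkDerivation k ![0, X 0 ^ 3, X 1, X 2, X 0 ^ 2]

/-- `σ₀ = a`. -/
noncomputable def sigma0 (k : Type*) [Field k] [CharZero k] : MvPolynomial (Fin 5) k := X 0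

/-- `σ₁ = av − x`. -/
noncomputable def sigma1 (k : Type*) [Field k] [CharZero k] : MvPolynomial (Fin 5) k :=
  X 0 * X 4 - X 1

/-- `σ₂ = (1/2)(av² − 2xv + 2a²y)`. -/
noncomputable def sigma2 (k : Type*) [Field k] [CharZero k] : MvPolynomial (Fin 5) k :=
  C ((2 : k)⁻¹) * (X 0 * X 4 ^ 2 - 2 * X 1 * X 4 + 2 * X 0 ^ 2 * X 2)

/-- `σ₃ = (1/6)(av³ − 3xv² + 6a²yv − 6a⁴z)`. -/
noncomputable def sigma3 (k : Type*) [Field k] [CharZero k] : MvPolynomial (Fin 5) k :=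
  C ((6 : k)⁻¹) *
    (X 0 * X 4 ^ 3 - 3 * X 1 * X 4 ^ 2 + 6 * X 0 ^ 2 * X 2 * X 4 - 6 * X 0 ^ 4 * X 3)

/-- `σ₄ = (1/24)(av⁴ − 4xv³ + 12a²yv² − 24a⁴zv + 24a³xz − 12a³y²)`. -/
noncomputable def sigma4 (k : Type*) [Field k] [CharZero k] : MvPolynomial (Fin 5) k :=
  C ((24 : k)⁻¹) *
    (X 0 * X 4 ^ 4 - 4 * X 1 * X 4 ^ 3 + 12 * X 0 ^ 2 * X 2 * X 4 ^ 2 -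
      24 * X 0 ^ 4 * X 3 * X 4 + 24 * X 0 ^ 3 * X 1 * X 3 - 12 * X 0 ^ 3 * X 2 ^ 2)

/-- `σ₅ = (1/120)(av⁵ − 5xv⁴ + 20a²yv³ − 60a⁴zv² + 120a³xzv − 60a³y²v − 72x²a²z + 36xa²y²
+ 24a⁵yz)`. -/
noncomputable def sigma5 (k : Type*) [Field k] [CharZero k] : MvPolynomial (Fin 5) k :=
  C ((120 : k)⁻¹) *
    (X 0 * X 4 ^ 5 - 5 * X 1 * X 4 ^ 4 + 20 * X 0 ^ 2 * X 2 * X 4 ^ 3 -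
      60 * X 0 ^ 4 * X 3 * X 4 ^ 2 + 120 * X 0 ^ 3 * X 1 * X 3 * X 4 -
      60 * X 0 ^ 3 * X 2 ^ 2 * X 4 - 72 * X 1 ^ 2 * X 0 ^ 2 * X 3 +
      36 * X 1 * X 0 ^ 2 * X 2 ^ 2 + 24 * X 0 ^ 5 * X 2 * X 3)


private lemma cancelC {k : Type*} [Field k] [CharZero k] (m : k) (hm : m ≠ 0)
    (p q : MvPolynomial (Fin 5) k) (h : C m * p = C m * q) : p = q :=
  mul_left_cancel₀ (by simpa using hm) h

private lemma derNum {k : Type*} [Field k] [CharZero k]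
    (D : Derivation k (MvPolynomial (Fin 5) k) (MvPolynomial (Fin 5) k))
    (n : ℕ) [n.AtLeastTwo] : D (OfNat.ofNat n : MvPolynomial (Fin 5) k) = 0 := by
  have : (OfNat.ofNat n : MvPolynomial (Fin 5) k) = ((n : ℕ) : MvPolynomial (Fin 5) k) := by
    norm_cast
  rw [this, D.map_natCast]

private lemma derC {k : Type*} [Field k] [CharZero k]
    (D : Derivation k (MvPolynomial (Fin 5) k) (MvPolynomial (Fin 5) k))
    (c : k) (p : MvPolynomial (Fin 5) k) : D (C c * p) = C c * D p := by
  rw [C_mul', D.map_smul, C_mul']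

set_option maxHeartbeats 2000000 in
/-- The elements `σ₀, ..., σ₅` all lie in `A = ker D`, and `∂σₙ/∂v = σ_{n-1}` for
`1 ≤ n ≤ 5`. -/
theorem sigma_in_kernel_and_cable (k : Type*) [Field k] [CharZero k] :
    dimFiveDer k (sigma0 k) = 0 ∧ dimFiveDer k (sigma1 k) = 0 ∧
    dimFiveDer k (sigma2 k) = 0 ∧ dimFiveDer k (sigma3 k) = 0 ∧
    dimFiveDer k (sigma4 k) = 0 ∧ dimFiveDer k (sigma5 k) = 0 ∧
    pderiv (4 : Fin 5) (sigma1 k) = sigma0 k ∧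
    pderiv (4 : Fin 5) (sigma2 k) = sigma1 k ∧
    pderiv (4 : Fin 5) (sigma3 k) = sigma2 k ∧
    pderiv (4 : Fin 5) (sigma4 k) = sigma3 k ∧
    pderiv (4 : Fin 5) (sigma5 k) = sigma4 k := by
  have h : ∀ i, dimFiveDer k (X i) = ![0, X 0 ^ 3, X 1, X 2, X 0 ^ 2] i :=
    fun i => MvPolynomial.mkDerivation_X _ _ _
  have h0 := h 0; have h1 := h 1; have h2 := h 2; have h3 := h 3; have h4 := h 4
  simp only [Matrix.cons_val_zero, Matrix.cons_val_one, Matrix.head_cons, Matrix.cons_val_two,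
    Matrix.tail_cons, Matrix.cons_val_three, Matrix.cons_val_four] at h0 h1 h2 h3 h4
  have d2 : dimFiveDer k 2 = 0 := derNum _ 2
  have d3 : dimFiveDer k 3 = 0 := derNum _ 3
  have d4 : dimFiveDer k 4 = 0 := derNum _ 4
  have d5 : dimFiveDer k 5 = 0 := derNum _ 5
  have d6 : dimFiveDer k 6 = 0 := derNum _ 6
  have d12 : dimFiveDer k 12 = 0 := derNum _ 12
  have d20 : dimFiveDer k 20 = 0 := derNum _ 20
  have d24 : dimFiveDer k 24 = 0 := derNum _ 24
  have d36 : dimFiveDer k 36 = 0 := derNum _ 36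
  have d60 : dimFiveDer k 60 = 0 := derNum _ 60
  have d72 : dimFiveDer k 72 = 0 := derNum _ 72
  have d120 : dimFiveDer k 120 = 0 := derNum _ 120
  have p2 : pderiv (4 : Fin 5) (2 : MvPolynomial (Fin 5) k) = 0 := derNum _ 2
  have p3 : pderiv (4 : Fin 5) (3 : MvPolynomial (Fin 5) k) = 0 := derNum _ 3
  have p4 : pderiv (4 : Fin 5) (4 : MvPolynomial (Fin 5) k) = 0 := derNum _ 4
  have p5 : pderiv (4 : Fin 5) (5 : MvPolynomial (Fin 5) k) = 0 := derNum _ 5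
  have p6 : pderiv (4 : Fin 5) (6 : MvPolynomial (Fin 5) k) = 0 := derNum _ 6
  have p12 : pderiv (4 : Fin 5) (12 : MvPolynomial (Fin 5) k) = 0 := derNum _ 12
  have p20 : pderiv (4 : Fin 5) (20 : MvPolynomial (Fin 5) k) = 0 := derNum _ 20
  have p24 : pderiv (4 : Fin 5) (24 : MvPolynomial (Fin 5) k) = 0 := derNum _ 24
  have p36 : pderiv (4 : Fin 5) (36 : MvPolynomial (Fin 5) k) = 0 := derNum _ 36
  have p60 : pderiv (4 : Fin 5) (60 : MvPolynomial (Fin 5) k) = 0 := derNum _ 60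
  have p72 : pderiv (4 : Fin 5) (72 : MvPolynomial (Fin 5) k) = 0 := derNum _ 72
  have p120 : pderiv (4 : Fin 5) (120 : MvPolynomial (Fin 5) k) = 0 := derNum _ 120
  have expand : ∀ p q : MvPolynomial (Fin 5) k,
      dimFiveDer k p = q → dimFiveDer k p = q := fun _ _ hh => hh
  refine ⟨?_, ?_, ?_, ?_, ?_, ?_, ?_, ?_, ?_, ?_, ?_⟩
  · rw [sigma0, h0]
  · rw [sigma1]
    simp only [map_sub, Derivation.leibniz, h0, h1, h4, smul_eq_mul]
    ring
  · rw [sigma2, derC]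
    suffices hs : dimFiveDer k (X 0 * X 4 ^ 2 - 2 * X 1 * X 4 + 2 * (X 0:MvPolynomial (Fin 5) k) ^ 2 * X 2) = 0 by
      rw [hs, mul_zero]
    simp only [map_sub, map_add, Derivation.leibniz, Derivation.leibniz_pow, map_ofNat,
      d2, d3, d4, d5, d6, d12, d20, d24, d36, d60, d72, d120, h0, h1, h2, h3, h4, smul_eq_mul]
    ring
  · rw [sigma3, derC]
    suffices hs : dimFiveDer k (X 0 * X 4 ^ 3 - 3 * X 1 * X 4 ^ 2 + 6 * (X 0:MvPolynomial (Fin 5) k) ^ 2 * X 2 * X 4 - 6 * X 0 ^ 4 * X 3) = 0 by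
      rw [hs, mul_zero]
    simp only [map_sub, map_add, Derivation.leibniz, Derivation.leibniz_pow,
      d2, d3, d4, d5, d6, d12, d20, d24, d36, d60, d72, d120, h0, h1, h2, h3, h4, smul_eq_mul]
    ring
  · rw [sigma4, derC]
    suffices hs : dimFiveDer k (X 0 * X 4 ^ 4 - 4 * X 1 * X 4 ^ 3 + 12 * (X 0:MvPolynomial (Fin 5) k) ^ 2 * X 2 * X 4 ^ 2 -
        24 * X 0 ^ 4 * X 3 * X 4 + 24 * X 0 ^ 3 * X 1 * X 3 - 12 * X 0 ^ 3 * X 2 ^ 2) = 0 by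
      rw [hs, mul_zero]
    simp only [map_sub, map_add, Derivation.leibniz, Derivation.leibniz_pow,
      d2, d3, d4, d5, d6, d12, d20, d24, d36, d60, d72, d120, h0, h1, h2, h3, h4, smul_eq_mul]
    ring
  · rw [sigma5, derC]
    suffices hs : dimFiveDer k (X 0 * X 4 ^ 5 - 5 * X 1 * X 4 ^ 4 + 20 * (X 0:MvPolynomial (Fin 5) k) ^ 2 * X 2 * X 4 ^ 3 -
        60 * X 0 ^ 4 * X 3 * X 4 ^ 2 + 120 * X 0 ^ 3 * X 1 * X 3 * X 4 -
        60 * X 0 ^ 3 * X 2 ^ 2 * X 4 - 72 * X 1 ^ 2 * X 0 ^ 2 * X 3 +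
        36 * X 1 * X 0 ^ 2 * X 2 ^ 2 + 24 * X 0 ^ 5 * X 2 * X 3) = 0 by
      rw [hs, mul_zero]
    simp only [map_sub, map_add, Derivation.leibniz, Derivation.leibniz_pow,
      d2, d3, d4, d5, d6, d12, d20, d24, d36, d60, d72, d120, h0, h1, h2, h3, h4, smul_eq_mul]
    ring
  · rw [sigma1, sigma0]
    simp only [map_sub, Derivation.leibniz, pderiv_X_self,
      pderiv_X_of_ne (by decide : (0 : Fin 5) ≠ 4),
      pderiv_X_of_ne (by decide : (1 : Fin 5) ≠ 4), smul_eq_mul]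
    ring
  · refine cancelC (2 : k) two_ne_zero _ _ ?_
    rw [sigma2, derC (pderiv 4), ← mul_assoc, ← C_mul, mul_inv_cancel₀ (two_ne_zero), C_1,
      one_mul, sigma1]
    simp only [map_sub, map_add, Derivation.leibniz, Derivation.leibniz_pow,
      d2, d3, d4, d5, d6, d12, d20, d24, d36, d60, d72, d120, p2, p3, p4, p5, p6, p12, p20, p24, p36, p60, p72, p120, pderiv_X_self,
      pderiv_X_of_ne (by decide : (0 : Fin 5) ≠ 4),
      pderiv_X_of_ne (by decide : (1 : Fin 5) ≠ 4),
      pderiv_X_of_ne (by decide : (2 : Fin 5) ≠ 4),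
      pderiv_X_of_ne (by decide : (3 : Fin 5) ≠ 4), smul_eq_mul, map_ofNat]
    ring
  · refine cancelC (6 : k) (by norm_num) _ _ ?_
    rw [sigma3, derC (pderiv 4), ← mul_assoc, ← C_mul,
      mul_inv_cancel₀ (by norm_num : (6:k) ≠ 0), C_1, one_mul, sigma2,
      ← mul_assoc, ← C_mul, show (6:k) * (2:k)⁻¹ = 3 by norm_num,
      show (C (3:k) : MvPolynomial (Fin 5) k) = 3 from map_ofNat _ _]
    simp only [map_sub, map_add, Derivation.leibniz, Derivation.leibniz_pow,
      d2, d3, d4, d5, d6, d12, d20, d24, d36, d60, d72, d120, p2, p3, p4, p5, p6, p12, p20, p24, p36, p60, p72, p120, pderiv_X_self,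
      pderiv_X_of_ne (by decide : (0 : Fin 5) ≠ 4),
      pderiv_X_of_ne (by decide : (1 : Fin 5) ≠ 4),
      pderiv_X_of_ne (by decide : (2 : Fin 5) ≠ 4),
      pderiv_X_of_ne (by decide : (3 : Fin 5) ≠ 4), smul_eq_mul, map_ofNat]
    ring
  · refine cancelC (24 : k) (by norm_num) _ _ ?_
    rw [sigma4, derC (pderiv 4), ← mul_assoc, ← C_mul,
      mul_inv_cancel₀ (by norm_num : (24:k) ≠ 0), C_1, one_mul, sigma3,
      ← mul_assoc, ← C_mul, show (24:k) * (6:k)⁻¹ = 4 by norm_num,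
      show (C (4:k) : MvPolynomial (Fin 5) k) = 4 from map_ofNat _ _]
    simp only [map_sub, map_add, Derivation.leibniz, Derivation.leibniz_pow,
      d2, d3, d4, d5, d6, d12, d20, d24, d36, d60, d72, d120, p2, p3, p4, p5, p6, p12, p20, p24, p36, p60, p72, p120, pderiv_X_self,
      pderiv_X_of_ne (by decide : (0 : Fin 5) ≠ 4),
      pderiv_X_of_ne (by decide : (1 : Fin 5) ≠ 4),
      pderiv_X_of_ne (by decide : (2 : Fin 5) ≠ 4),
      pderiv_X_of_ne (by decide : (3 : Fin 5) ≠ 4), smul_eq_mul, map_ofNat]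
    ring
  · refine cancelC (120 : k) (by norm_num) _ _ ?_
    rw [sigma5, derC (pderiv 4), ← mul_assoc, ← C_mul,
      mul_inv_cancel₀ (by norm_num : (120:k) ≠ 0), C_1, one_mul, sigma4,
      ← mul_assoc, ← C_mul, show (120:k) * (24:k)⁻¹ = 5 by norm_num,
      show (C (5:k) : MvPolynomial (Fin 5) k) = 5 from map_ofNat _ _]
    simp only [map_sub, map_add, Derivation.leibniz, Derivation.leibniz_pow,
      d2, d3, d4, d5, d6, d12, d20, d24, d36, d60, d72, d120, p2, p3, p4, p5, p6, p12, p20, p24, p36, p60, p72, p120, pderiv_X_self,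
      pderiv_X_of_ne (by decide : (0 : Fin 5) ≠ 4),
      pderiv_X_of_ne (by decide : (1 : Fin 5) ≠ 4),
      pderiv_X_of_ne (by decide : (2 : Fin 5) ≠ 4),
      pderiv_X_of_ne (by decide : (3 : Fin 5) ≠ 4), smul_eq_mul, map_ofNat]
    ring
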